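/- Let k be a field with char k ≠ 2, let Q be a quadrilateral, and let f(x) = g(x) - g(a) be an affine transformation of k² with g an invertible linear map. Then there exists λ ∈ k, λ ≠ 0, such that for all v, w ∈ k²: ⟨v, w⟩_Q = λ⟨g(v), g(w)⟩_{g(Q)}. Consequently, a pair of lines ℓ₁, ℓ₂ is Q-orthogonal if and only if f(ℓ₁), f(ℓ₂) is f(Q)-orthogonal. -/

import Mathlib

/-- `α` of Definition 2.1 for the quadrilateral with side coefficients
`(t_A,u_A), (t_B,u_B), (t_{A'},u_{A'}), (t_{B'},u_{B'})`. -/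
def alphaQ {k : Type*} [Field k] (tA uA tB uB tA' uA' tB' uB' : k) : k :=
  tA*uB*uA'*uB' - uA*tB*uA'*uB' + uA*uB*tA'*uB' - uA*uB*uA'*tB'

/-- `β` of Definition 2.1. -/
def betaQ {k : Type*} [Field k] (tA uA tB uB tA' uA' tB' uB' : k) : k :=
  tA*uB*tA'*uB' - uA*tB*uA'*tB'

/-- `γ` of Definition 2.1. -/
def gammaQ {k : Type*} [Field k] (tA uA tB uB tA' uA' tB' uB' : k) : k :=
  tA*tB*tA'*uB' - tA*tB*uA'*tB' + tA*uB*tA'*tB' - uA*tB*tA'*tB'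

/-- The inner product `⟨v,w⟩ = vᵀ [[γ,-β],[-β,α]] w` on `k²`, evaluated on
direction vectors `v = (u,t)` of lines. -/
def formQ {k : Type*} [Field k] (α β γ : k) (v w : k × k) : k :=
  γ * v.1 * w.1 - β * v.1 * w.2 - β * v.2 * w.1 + α * v.2 * w.2

/-- Proposition 2.6: for a quadrilateral `Q` (adjacent sides not parallel) and
an invertible affine transformation `f(x) = g(x) - g(a)` with `g` linear and
bijective, there is `λ ≠ 0` in `k` with `⟨v,w⟩_Q = λ ⟨g(v), g(w)⟩_{f(Q)}` for
all `v, w ∈ k²` (the sides of `f(Q) = g(Q) + const` having direction vectors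
`g(u_L, t_L)`); consequently two lines are `Q`-orthogonal if and only if their
images under `f` are `f(Q)`-orthogonal. -/
theorem form_transforms {k : Type*} [Field k] (hchar : (2 : k) ≠ 0)
    (tA uA tB uB tA' uA' tB' uB' : k)
    (hAB : tA*uB - tB*uA ≠ 0) (hBA' : tB*uA' - tA'*uB ≠ 0)
    (hA'B' : tA'*uB' - tB'*uA' ≠ 0) (hB'A : tB'*uA - tA*uB' ≠ 0)
    (g : (k × k) →ₗ[k] (k × k)) (hg : Function.Bijective g)
    (a : k × k) (f : (k × k) → (k × k)) (hf : f = fun x => g x - g a)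
    (tA₁ uA₁ tB₁ uB₁ tA'₁ uA'₁ tB'₁ uB'₁ : k)
    (hgA : g (uA, tA) = (uA₁, tA₁)) (hgB : g (uB, tB) = (uB₁, tB₁))
    (hgA' : g (uA', tA') = (uA'₁, tA'₁)) (hgB' : g (uB', tB') = (uB'₁, tB'₁)) :
    ∃ lam : k, lam ≠ 0 ∧
      (∀ v w : k × k,
        formQ (alphaQ tA uA tB uB tA' uA' tB' uB')
              (betaQ tA uA tB uB tA' uA' tB' uB')
              (gammaQ tA uA tB uB tA' uA' tB' uB') v w
        = lam * formQ (alphaQ tA₁ uA₁ tB₁ uB₁ tA'₁ uA'₁ tB'₁ uB'₁)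
                      (betaQ tA₁ uA₁ tB₁ uB₁ tA'₁ uA'₁ tB'₁ uB'₁)
                      (gammaQ tA₁ uA₁ tB₁ uB₁ tA'₁ uA'₁ tB'₁ uB'₁) (g v) (g w)) ∧
      (∀ v w : k × k,
        formQ (alphaQ tA uA tB uB tA' uA' tB' uB')
              (betaQ tA uA tB uB tA' uA' tB' uB')
              (gammaQ tA uA tB uB tA' uA' tB' uB') v w = 0 ↔
        formQ (alphaQ tA₁ uA₁ tB₁ uB₁ tA'₁ uA'₁ tB'₁ uB'₁)
              (betaQ tA₁ uA₁ tB₁ uB₁ tA'₁ uA'₁ tB'₁ uB'₁)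
              (gammaQ tA₁ uA₁ tB₁ uB₁ tA'₁ uA'₁ tB'₁ uB'₁) (g v) (g w) = 0) := by
  classical
  set p := (g (1, 0)).1 with hp
  set r := (g (1, 0)).2 with hr
  set q := (g (0, 1)).1 with hq
  set s := (g (0, 1)).2 with hs
  have hgform : ∀ v : k × k, g v = (p * v.1 + q * v.2, r * v.1 + s * v.2) := by
    intro v
    have hv : v = v.1 • ((1 : k), (0 : k)) + v.2 • ((0 : k), (1 : k)) := by
      ext <;> simp
    rw [hv, map_add, map_smul, map_smul]
    ext <;> simp [hp, hr, hq, hs, mul_comm]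
  have hd : p * s - q * r ≠ 0 := by
    intro h0
    have hker1 : g (q, -p) = 0 := by
      rw [hgform]
      ext
      · simp only [Prod.fst_zero]; ring
      · simp only [Prod.snd_zero]; linear_combination -h0
    have hker2 : g (s, -r) = 0 := by
      rw [hgform]
      ext
      · simp only [Prod.fst_zero]; linear_combination h0
      · simp only [Prod.snd_zero]; ring
    have hg0 : g 0 = 0 := map_zero g
    by_cases hqp : (q, -p) = (0 : k × k)
    · by_cases hsr : (s, -r) = (0 : k × k)
      · have hq0 : q = 0 := congrArg Prod.fst hqp
        have hp0 : p = 0 := by have := congrArg Prod.snd hqp; simpa using this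
        have hs0 : s = 0 := congrArg Prod.fst hsr
        have hr0 : r = 0 := by have := congrArg Prod.snd hsr; simpa using this
        have : g (1, 0) = g (0, 0) := by
          have h1 : g (1, 0) = (p, r) := by rw [hgform]; ext <;> simp
          rw [h1, hp0, hr0]; exact hg0.symm
        have := hg.injective this
        simpa using this
      · have : (s, -r) = (0 : k × k) := hg.injective (by rw [hker2, hg0])
        exact hsr this
    · have : (q, -p) = (0 : k × k) := hg.injective (by rw [hker1, hg0])
      exact hqp this
  -- coordinates of the transformed direction vectors
  have eA1 : uA₁ = p * uA + q * tA := by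
    have := congrArg Prod.fst ((hgform (uA, tA)).symm.trans hgA); simpa using this.symm
  have eA2 : tA₁ = r * uA + s * tA := by
    have := congrArg Prod.snd ((hgform (uA, tA)).symm.trans hgA); simpa using this.symm
  have eB1 : uB₁ = p * uB + q * tB := by
    have := congrArg Prod.fst ((hgform (uB, tB)).symm.trans hgB); simpa using this.symm
  have eB2 : tB₁ = r * uB + s * tB := by
    have := congrArg Prod.snd ((hgform (uB, tB)).symm.trans hgB); simpa using this.symm
  have eA'1 : uA'₁ = p * uA' + q * tA' := by
    have := congrArg Prod.fst ((hgform (uA', tA')).symm.trans hgA'); simpa using this.symm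
  have eA'2 : tA'₁ = r * uA' + s * tA' := by
    have := congrArg Prod.snd ((hgform (uA', tA')).symm.trans hgA'); simpa using this.symm
  have eB'1 : uB'₁ = p * uB' + q * tB' := by
    have := congrArg Prod.fst ((hgform (uB', tB')).symm.trans hgB'); simpa using this.symm
  have eB'2 : tB'₁ = r * uB' + s * tB' := by
    have := congrArg Prod.snd ((hgform (uB', tB')).symm.trans hgB'); simpa using this.symm
  have key : ∀ v w : k × k,
      formQ (alphaQ tA₁ uA₁ tB₁ uB₁ tA'₁ uA'₁ tB'₁ uB'₁)
            (betaQ tA₁ uA₁ tB₁ uB₁ tA'₁ uA'₁ tB'₁ uB'₁)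
            (gammaQ tA₁ uA₁ tB₁ uB₁ tA'₁ uA'₁ tB'₁ uB'₁) (g v) (g w)
      = (p * s - q * r) ^ 3 *
        formQ (alphaQ tA uA tB uB tA' uA' tB' uB')
              (betaQ tA uA tB uB tA' uA' tB' uB')
              (gammaQ tA uA tB uB tA' uA' tB' uB') v w := by
    intro v w
    rw [hgform v, hgform w]
    simp only [formQ, alphaQ, betaQ, gammaQ, eA1, eA2, eB1, eB2, eA'1, eA'2,
      eB'1, eB'2]
    ring
  have hd3 : (p * s - q * r) ^ 3 ≠ 0 := pow_ne_zero _ hd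
  refine ⟨((p * s - q * r) ^ 3)⁻¹, inv_ne_zero hd3, ?_, ?_⟩
  · intro v w
    rw [key v w]
    field_simp
  · intro v w
    rw [key v w]
    constructor
    · intro h
      exact mul_eq_zero_of_right _ h
    · intro h
      rcases mul_eq_zero.mp h with h | h
      · exact absurd h hd3
      · exact h
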